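/- Let η : Γ → 𝔊 be a generating cocycle with kernel Δ. Then the following are equivalent: (1) (Γ,𝔊,η) is a coGalois triple, i.e. η is surjective and the maps J and S between the poset of closed subgroups of Γ containing Δ and the poset of ideals of 𝔊 are mutually inverse order isomorphisms; (2) η is surjective and S(J(Λ)) = Λ for every closed subgroup Λ of Γ containing Δ; (3) η is surjective and J is injective; (4) η is surjective and S is surjective; (5) η(Λ) = J(Λ) for every closed subgroup Λ of Γ containing Δ; (6) η(Λ) is an ideal of 𝔊 for every closed subgroup Λ of Γ containing Δ. -/

import Mathlib

/-- An *ideal* of a topological `Γ`-group `𝔊`: a closed, normal, `Γ`-invariant subgroup. -/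
def IsIdealSG (Γ : Type*) {𝔊 : Type*} [Group 𝔊] [TopologicalSpace 𝔊] [SMul Γ 𝔊]
    (a : Subgroup 𝔊) : Prop :=
  IsClosed (a : Set 𝔊) ∧ a.Normal ∧ ∀ (γ : Γ) (g : 𝔊), g ∈ a → γ • g ∈ a

/-- `cogalJ Γ η X` is the smallest ideal of the `Γ`-group `𝔊` containing `η '' X`. -/
def cogalJ (Γ : Type*) {𝔊 : Type*} [Group 𝔊] [TopologicalSpace 𝔊] [SMul Γ 𝔊]
    (η : Γ → 𝔊) (X : Set Γ) : Subgroup 𝔊 :=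
  sInf {a : Subgroup 𝔊 | IsIdealSG Γ a ∧ ∀ γ ∈ X, η γ ∈ a}

set_option linter.unusedSectionVars false
set_option linter.unusedVariables false

section aux
variable {Γ 𝔊 : Type*} [Group Γ] [Group 𝔊] [TopologicalSpace 𝔊] [MulDistribMulAction Γ 𝔊]
variable {η : Γ → 𝔊}

lemma eta_one (hcoc : ∀ σ τ : Γ, η (σ * τ) = η σ * σ • η τ) : η 1 = 1 := by
  have := hcoc 1 1
  rw [mul_one, one_smul] at this
  exact (left_eq_mul.mp this)

lemma eta_inv (hcoc : ∀ σ τ : Γ, η (σ * τ) = η σ * σ • η τ) (σ : Γ) :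
    η σ⁻¹ = (σ⁻¹ • η σ)⁻¹ := by
  have := hcoc σ⁻¹ σ
  rw [inv_mul_cancel, eta_one hcoc] at this
  exact eq_inv_of_mul_eq_one_left this.symm

lemma eta_eq_iff (hcoc : ∀ σ τ : Γ, η (σ * τ) = η σ * σ • η τ) (σ τ : Γ) :
    η (τ⁻¹ * σ) = 1 ↔ η σ = η τ := by
  rw [hcoc τ⁻¹ σ, eta_inv hcoc, inv_mul_eq_one, smul_left_cancel_iff]
  exact eq_comm

lemma idealJ (X : Set Γ) : IsIdealSG Γ (cogalJ Γ η X) := by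
  refine ⟨?_, ⟨fun n hn g => ?_⟩, fun γ g hg => ?_⟩
  · rw [cogalJ, Subgroup.coe_sInf]
    exact isClosed_iInter fun a => isClosed_iInter fun ha => ha.1.1
  · exact Subgroup.mem_sInf.2 fun a ha =>
      ha.1.2.1.conj_mem n (Subgroup.mem_sInf.1 hn a ha) g
  · exact Subgroup.mem_sInf.2 fun a ha =>
      ha.1.2.2 γ g (Subgroup.mem_sInf.1 hg a ha)

lemma mem_J {X : Set Γ} {γ : Γ} (hγ : γ ∈ X) : η γ ∈ cogalJ Γ η X :=
  Subgroup.mem_sInf.2 fun _ ha => ha.2 γ hγ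

lemma J_le {X : Set Γ} {a : Subgroup 𝔊} (ha : IsIdealSG Γ a) (h : ∀ γ ∈ X, η γ ∈ a) :
    cogalJ Γ η X ≤ a := sInf_le ⟨ha, h⟩

lemma J_mono {X Y : Set Γ} (h : X ⊆ Y) : cogalJ Γ η X ≤ cogalJ Γ η Y :=
  sInf_le_sInf fun a ⟨ha, h'⟩ => ⟨ha, fun γ hγ => h' γ (h hγ)⟩

/-- preimage of an invariant subgroup as a subgroup -/
def preS (hcoc : ∀ σ τ : Γ, η (σ * τ) = η σ * σ • η τ) (a : Subgroup 𝔊)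
    (hinv : ∀ (γ : Γ) (g : 𝔊), g ∈ a → γ • g ∈ a) : Subgroup Γ where
  carrier := η ⁻¹' a
  one_mem' := by simp [Set.mem_preimage, eta_one hcoc, a.one_mem]
  mul_mem' := fun {σ τ} hσ hτ => by
    simp only [Set.mem_preimage] at *
    rw [hcoc]
    exact a.mul_mem hσ (hinv σ _ hτ)
  inv_mem' := fun {σ} hσ => by
    simp only [Set.mem_preimage] at *
    rw [eta_inv hcoc]
    exact a.inv_mem (hinv σ⁻¹ _ hσ)

end aux

/-- Characterizations of coGalois triples: for a generating cocycle `η : Γ → 𝔊` with kernel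
`Δ`, the following are equivalent:
(1) `(Γ,𝔊,η)` is a coGalois triple: `η` is surjective and the maps `J` and `S` are mutually
inverse order isomorphisms between the closed subgroups of `Γ` containing `Δ` and the ideals
of `𝔊`;
(2) `η` is surjective and `S ∘ J = id`;
(3) `η` is surjective and `J` is injective;
(4) `η` and `S` are surjective;
(5) `η(Λ) = J(Λ)` for all closed `Λ ⊇ Δ`;
(6) `η(Λ)` is an ideal of `𝔊` for all closed `Λ ⊇ Δ`. -/
theorem coGalois_triple_TFAE
    {Γ 𝔊 : Type*} [Group Γ] [TopologicalSpace Γ] [IsTopologicalGroup Γ]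
    [CompactSpace Γ] [T2Space Γ] [TotallyDisconnectedSpace Γ]
    [Group 𝔊] [TopologicalSpace 𝔊] [IsTopologicalGroup 𝔊]
    [CompactSpace 𝔊] [T2Space 𝔊] [TotallyDisconnectedSpace 𝔊]
    [MulDistribMulAction Γ 𝔊] [ContinuousSMul Γ 𝔊]
    (η : Γ → 𝔊) (hcont : Continuous η)
    (hcoc : ∀ σ τ : Γ, η (σ * τ) = η σ * σ • η τ)
    (hgen : (Subgroup.closure (Set.range η)).topologicalClosure = ⊤) :
    List.TFAE
      [Function.Surjective η ∧
         (∀ Λ : Subgroup Γ, IsClosed (Λ : Set Γ) → (∀ γ : Γ, η γ = 1 → γ ∈ Λ) →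
            η ⁻¹' ((cogalJ Γ η (Λ : Set Γ) : Subgroup 𝔊) : Set 𝔊) = (Λ : Set Γ)) ∧
         (∀ a : Subgroup 𝔊, IsIdealSG Γ a → cogalJ Γ η (η ⁻¹' (a : Set 𝔊)) = a),
       Function.Surjective η ∧
         (∀ Λ : Subgroup Γ, IsClosed (Λ : Set Γ) → (∀ γ : Γ, η γ = 1 → γ ∈ Λ) →
            η ⁻¹' ((cogalJ Γ η (Λ : Set Γ) : Subgroup 𝔊) : Set 𝔊) = (Λ : Set Γ)),
       Function.Surjective η ∧
         (∀ Λ₁ Λ₂ : Subgroup Γ,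
            IsClosed (Λ₁ : Set Γ) → (∀ γ : Γ, η γ = 1 → γ ∈ Λ₁) →
            IsClosed (Λ₂ : Set Γ) → (∀ γ : Γ, η γ = 1 → γ ∈ Λ₂) →
            cogalJ Γ η (Λ₁ : Set Γ) = cogalJ Γ η (Λ₂ : Set Γ) → Λ₁ = Λ₂),
       Function.Surjective η ∧
         (∀ Λ : Subgroup Γ, IsClosed (Λ : Set Γ) → (∀ γ : Γ, η γ = 1 → γ ∈ Λ) →
            ∃ a : Subgroup 𝔊, IsIdealSG Γ a ∧ η ⁻¹' (a : Set 𝔊) = (Λ : Set Γ)),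
       ∀ Λ : Subgroup Γ, IsClosed (Λ : Set Γ) → (∀ γ : Γ, η γ = 1 → γ ∈ Λ) →
          η '' (Λ : Set Γ) = ((cogalJ Γ η (Λ : Set Γ) : Subgroup 𝔊) : Set 𝔊),
       ∀ Λ : Subgroup Γ, IsClosed (Λ : Set Γ) → (∀ γ : Γ, η γ = 1 → γ ∈ Λ) →
          ∃ a : Subgroup 𝔊, IsIdealSG Γ a ∧ (a : Set 𝔊) = η '' (Λ : Set Γ)] := by
  tfae_have 1 → 2 := fun ⟨h1, h2, _⟩ => ⟨h1, h2⟩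
  tfae_have 2 → 3 := by
    rintro ⟨hs, h⟩
    refine ⟨hs, fun Λ₁ Λ₂ hc1 hd1 hc2 hd2 heq => ?_⟩
    have e1 := h Λ₁ hc1 hd1
    have e2 := h Λ₂ hc2 hd2
    rw [heq] at e1
    exact SetLike.coe_injective (e1.symm.trans e2)
  tfae_have 3 → 4 := by
    rintro ⟨hs, hinj⟩
    refine ⟨hs, fun Λ hc hd => ⟨cogalJ Γ η (Λ : Set Γ), idealJ _, ?_⟩⟩
    set Λ' : Subgroup Γ := preS hcoc (cogalJ Γ η (Λ : Set Γ)) (idealJ _).2.2 with hΛ'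
    have hcΛ' : IsClosed (Λ' : Set Γ) := (idealJ (η := η) (Λ : Set Γ)).1.preimage hcont
    have hdΛ' : ∀ γ : Γ, η γ = 1 → γ ∈ Λ' := fun γ hγ => by
      show η γ ∈ cogalJ Γ η (Λ : Set Γ); rw [hγ]; exact one_mem _
    have hJ : cogalJ Γ η (Λ' : Set Γ) = cogalJ Γ η (Λ : Set Γ) := by
      refine le_antisymm (J_le (idealJ _) fun γ hγ => hγ) (J_mono fun γ hγ => ?_)
      exact mem_J hγ
    have heqΛ := hinj Λ' Λ hcΛ' hdΛ' hc hd hJ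
    have hce : η ⁻¹' ((cogalJ Γ η (Λ : Set Γ) : Subgroup 𝔊) : Set 𝔊) = (Λ' : Set Γ) := rfl
    rw [hce, heqΛ]
  tfae_have 4 → 6 := by
    rintro ⟨hs, h⟩ Λ hc hd
    obtain ⟨a, ha, hpre⟩ := h Λ hc hd
    exact ⟨a, ha, by rw [← hpre, Set.image_preimage_eq _ hs]⟩
  tfae_have 6 → 5 := by
    intro h Λ hc hd
    obtain ⟨a, ha, hEq⟩ := h Λ hc hd
    refine subset_antisymm ?_ ?_
    · rintro _ ⟨γ, hγ, rfl⟩; exact mem_J hγ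
    · intro g hg
      rw [← hEq]
      refine J_le ha (fun γ hγ => ?_) hg
      have h' : η γ ∈ η '' (Λ : Set Γ) := ⟨γ, hγ, rfl⟩
      rwa [← hEq] at h'
  tfae_have 5 → 1 := by
    intro h5
    -- surjectivity
    have htopc : IsClosed ((⊤ : Subgroup Γ) : Set Γ) := by
      rw [Subgroup.coe_top]; exact isClosed_univ
    have hJtop : (⊤ : Subgroup 𝔊) ≤ cogalJ Γ η ((⊤ : Subgroup Γ) : Set Γ) := by
      have h₁ : Subgroup.closure (Set.range η) ≤ cogalJ Γ η ((⊤ : Subgroup Γ) : Set Γ) :=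
        Subgroup.closure_le _ |>.2 (by rintro _ ⟨γ, rfl⟩; exact mem_J (by simp))
      have h₂ := Subgroup.topologicalClosure_minimal _ h₁ (idealJ _).1
      rwa [hgen] at h₂
    have h5top := h5 ⊤ htopc (fun _ _ => trivial)
    have hsurj : Function.Surjective η := by
      intro g
      have hg : g ∈ η '' ((⊤ : Subgroup Γ) : Set Γ) := by
        rw [h5top]; exact hJtop trivial
      obtain ⟨γ, -, hγ⟩ := hg
      exact ⟨γ, hγ⟩
    refine ⟨hsurj, fun Λ hc hd => ?_, fun a ha => ?_⟩
    · rw [← h5 Λ hc hd]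
      refine subset_antisymm ?_ (Set.subset_preimage_image _ _)
      rintro σ hσ
      obtain ⟨l, hl, hEq⟩ := hσ
      have h1 : η (l⁻¹ * σ) = 1 := (eta_eq_iff hcoc σ l).2 hEq.symm
      have := Λ.mul_mem hl (hd _ h1)
      rwa [mul_inv_cancel_left] at this
    · set Λ : Subgroup Γ := preS hcoc a ha.2.2 with hΛ
      have hcΛ : IsClosed (Λ : Set Γ) := ha.1.preimage hcont
      have hdΛ : ∀ γ : Γ, η γ = 1 → γ ∈ Λ := fun γ hγ => by
        show η γ ∈ a; rw [hγ]; exact one_mem _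
      have h5Λ := h5 Λ hcΛ hdΛ
      have himg : η '' ((Λ : Set Γ)) = (a : Set 𝔊) := by
        show η '' (η ⁻¹' (a : Set 𝔊)) = _
        exact Set.image_preimage_eq _ hsurj
      refine SetLike.coe_injective ?_
      show ((cogalJ Γ η (Λ : Set Γ) : Subgroup 𝔊) : Set 𝔊) = (a : Set 𝔊)
      rw [← h5Λ, himg]
  tfae_finish
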